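/- Let C = x_1 y_1 x_2 y_2 ⋯ x_r y_r x_1 be a feasible cycle with M(C) = {x_i y_i : 1 ≤ i ≤ r} (so C contains exactly r edges of M), and let xy ∈ M_0 be an edge with x, y ∉ V(C) such that e({x,y}, C) ≥ r + 1. Then the subgraph induced by V(C) ∪ {x, y} contains a feasible cycle C′ with M_0(C′) = M_0(C) ∪ {xy}. -/

import Mathlib

/-- `e(S, T)`: the number of edges of `G` with one end in `S` and the other in `T`. -/
noncomputable def eBtw {V : Type*} (G : SimpleGraph V) (S T : Set V) : ℕ :=
  {e : Sym2 V | e ∈ G.edgeSet ∧ ∃ a b, e = s(a, b) ∧ a ∈ S ∧ b ∈ T}.ncard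

/-- The set of vertices `{xᵢ, yᵢ : i ∈ F}` corresponding to a set `F` of matching
indices; here `Sum.inl i` plays the role of `xᵢ ∈ X` and `Sum.inr i` of `yᵢ ∈ Y`. -/
def iVerts {α : Type*} (F : Set α) : Set (α ⊕ α) :=
  {w | ∃ i ∈ F, w = Sum.inl i ∨ w = Sum.inr i}

/-- An `M`-alternating cycle `x_{i₁} y_{i₁} x_{i₂} y_{i₂} ⋯ x_{i_r} y_{i_r} x_{i₁}`
(where `M = {xᵢyᵢ}` is the perfect matching), encoded by its list of matching
indices `i₁, …, i_r`: consecutive (cyclically) indices are joined by the non-matching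
edges `y_{i_j} x_{i_{j+1}}`.  Such a cycle has `2 * l.length` edges, `l.length` of
which are matching edges. -/
def AltCycle {α : Type*} (G : SimpleGraph (α ⊕ α)) (l : List α) : Prop :=
  2 ≤ l.length ∧ l.Nodup ∧
    ∀ i : Fin l.length,
      G.Adj (Sum.inr (l.get i))
        (Sum.inl (l.get ⟨((i : ℕ) + 1) % l.length, Nat.mod_lt _ i.pos⟩))

/-- An `M`-alternating path `x_{i₁} y_{i₁} ⋯ x_{i_r} y_{i_r}` beginning and ending
with matching edges, encoded by its list of matching indices. -/
def AltPath {α : Type*} (G : SimpleGraph (α ⊕ α)) (l : List α) : Prop :=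
  l ≠ [] ∧ l.Nodup ∧ l.Chain' (fun a b => G.Adj (Sum.inr a) (Sum.inl b))

/-- A feasible path: an `M`-alternating path `x_{i₁} y_{i₁} ⋯ x_{i_r} y_{i_r}` whose
end-vertices `x_{i₁}` and `y_{i_r}` belong to `V(M₀)`, where `S` is the index set of
`M₀ ⊆ M`. -/
def FeasPath {α : Type*} [DecidableEq α] (G : SimpleGraph (α ⊕ α)) (S : Finset α)
    (l : List α) : Prop :=
  AltPath G l ∧ ∀ h : l ≠ [], l.head h ∈ S ∧ l.getLast h ∈ S


/-- **Lemma 1.** If `C = x₁y₁⋯x_ry_rx₁` is a feasible cycle (an `M`-alternating cycle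
with at least two `M₀`-edges, encoded by its index list `l`, `r = l.length`) and
`xy = x_a y_a ∈ M₀` is an edge outside `C` with `e({x,y}, C) ≥ r + 1`, then the
subgraph induced by `V(C) ∪ {x, y}` contains a feasible cycle `C′` with
`M₀(C′) = M₀(C) ∪ {xy}`. -/
theorem stmt4 (n : ℕ) (G : SimpleGraph (Fin n ⊕ Fin n))
    (hX : ∀ i j : Fin n, ¬ G.Adj (Sum.inl i) (Sum.inl j))
    (hY : ∀ i j : Fin n, ¬ G.Adj (Sum.inr i) (Sum.inr j))
    (hM : ∀ i : Fin n, G.Adj (Sum.inl i) (Sum.inr i))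
    (S : Finset (Fin n))
    (l : List (Fin n)) (hC : AltCycle G l) (hfeas : 2 ≤ (l.toFinset ∩ S).card)
    (a : Fin n) (haS : a ∈ S) (hal : a ∉ l)
    (he : l.length + 1 ≤
      eBtw G ({Sum.inl a, Sum.inr a} : Set (Fin n ⊕ Fin n)) (iVerts {i | i ∈ l})) :
    ∃ l' : List (Fin n), AltCycle G l' ∧
      (∀ b ∈ l', b ∈ l ∨ b = a) ∧
      l'.toFinset ∩ S = insert a (l.toFinset ∩ S) := by
  
  classical
  obtain ⟨hr, hnd, hadj⟩ := hC
  set r := l.length with hrdef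
  have hr0 : 0 < r := by omega
  haveI : NeZero r := ⟨by omega⟩
  have hginj : Function.Injective l.get := List.nodup_iff_injective_get.mp hnd
  have hsucc : ∀ j : Fin r, ((j + 1 : Fin r) : ℕ) = (j.val + 1) % r := by
    intro j
    rw [Fin.add_def, Fin.val_one']
    exact Nat.add_mod_mod _ _ _
  have hadj2 : ∀ (q : ℕ) (hq : q < r),
      G.Adj (Sum.inr (l[q]'hq)) (Sum.inl (l[(q + 1) % r]'(Nat.mod_lt _ hr0))) := by
    intro q hq
    simpa using hadj ⟨q, hq⟩
  have hadj3 : ∀ (q q' : ℕ) (hq : q < r) (hq' : q' < r), (q + 1) % r = q' →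
      G.Adj (Sum.inr (l[q]'hq)) (Sum.inl (l[q']'hq')) := by
    rintro q q' hq hq' rfl
    exact hadj2 q hq
  set f : Fin r → Sym2 (Fin n ⊕ Fin n) := fun j => s(Sum.inl a, Sum.inr (l.get j)) with hf
  set g : Fin r → Sym2 (Fin n ⊕ Fin n) := fun j => s(Sum.inr a, Sum.inl (l.get (j + 1))) with hg
  set PA : Finset (Fin r) :=
    Finset.univ.filter (fun j => G.Adj (Sum.inl a) (Sum.inr (l.get j))) with hPA
  set PB : Finset (Fin r) :=
    Finset.univ.filter (fun j => G.Adj (Sum.inr a) (Sum.inl (l.get (j + 1)))) with hPB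
  have hset : {e : Sym2 (Fin n ⊕ Fin n) | e ∈ G.edgeSet ∧ ∃ u v, e = s(u, v) ∧
        u ∈ ({Sum.inl a, Sum.inr a} : Set (Fin n ⊕ Fin n)) ∧ v ∈ iVerts {i | i ∈ l}} =
      ↑(PA.image f ∪ PB.image g) := by
    ext e
    simp only [Set.mem_setOf_eq, Finset.coe_union, Set.mem_union, Finset.coe_image,
      Set.mem_image, Finset.mem_coe, hPA, hPB, hf, hg, Finset.mem_filter, Finset.mem_univ,
      true_and]
    constructor
    · rintro ⟨hedge, u, v, rfl, hu, hv⟩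
      rw [SimpleGraph.mem_edgeSet] at hedge
      simp only [Set.mem_insert_iff, Set.mem_singleton_iff] at hu
      obtain ⟨i, hil, hv⟩ : ∃ i ∈ {i | i ∈ l}, v = Sum.inl i ∨ v = Sum.inr i := hv
      have hil' : i ∈ l := hil
      rcases hu with rfl | rfl
      · rcases hv with rfl | rfl
        · exact absurd hedge (hX a i)
        · obtain ⟨jj, rfl⟩ := List.mem_iff_get.mp hil'
          exact Or.inl ⟨jj, hedge, rfl⟩
      · rcases hv with rfl | rfl
        · obtain ⟨jj, rfl⟩ := List.mem_iff_get.mp hil'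
          refine Or.inr ⟨jj - 1, ?_, ?_⟩
          · rw [sub_add_cancel]; exact hedge
          · rw [sub_add_cancel]
        · exact absurd hedge (hY a i)
    · rintro (⟨jj, hjj, rfl⟩ | ⟨jj, hjj, rfl⟩)
      · exact ⟨G.mem_edgeSet.mpr hjj, _, _, rfl, Or.inl rfl,
          ⟨l.get jj, List.get_mem _ _, Or.inr rfl⟩⟩
      · exact ⟨G.mem_edgeSet.mpr hjj, _, _, rfl, Or.inr rfl,
          ⟨l.get (jj + 1), List.get_mem _ _, Or.inl rfl⟩⟩
  have hfinj : Function.Injective f := by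
    intro x y h
    simp only [hf, Sym2.eq_iff] at h
    rcases h with ⟨-, h⟩ | ⟨h, -⟩
    · exact hginj (Sum.inr_injective h)
    · simp at h
  have hginj' : Function.Injective g := by
    intro x y h
    simp only [hg, Sym2.eq_iff] at h
    rcases h with ⟨-, h⟩ | ⟨h, -⟩
    · exact add_right_cancel (hginj (Sum.inl_injective h))
    · simp at h
  have hdisj : Disjoint (PA.image f) (PB.image g) := by
    rw [Finset.disjoint_left]
    rintro e he1 he2
    obtain ⟨x, -, rfl⟩ := Finset.mem_image.mp he1
    obtain ⟨y, -, hxy⟩ := Finset.mem_image.mp he2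
    simp only [hf, hg, Sym2.eq_iff] at hxy
    rcases hxy with ⟨h1, -⟩ | ⟨h1, -⟩
    · simp at h1
    · have hx : a = l.get x := Sum.inr_injective h1
      exact hal (by rw [hx]; exact List.get_mem _ _)
  have hcount : PA.card + PB.card =
      eBtw G ({Sum.inl a, Sum.inr a} : Set (Fin n ⊕ Fin n)) (iVerts {i | i ∈ l}) := by
    unfold eBtw
    rw [hset, Set.ncard_coe_finset, Finset.card_union_of_disjoint hdisj,
      Finset.card_image_of_injective _ hfinj, Finset.card_image_of_injective _ hginj']
  rw [← hcount] at he
  have hpig : (PA ∩ PB).Nonempty := by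
    rw [← Finset.card_pos]
    have h1 := Finset.card_union_add_card_inter PA PB
    have h2 : (PA ∪ PB).card ≤ r := by
      simpa using Finset.card_le_univ (PA ∪ PB)
    omega
  obtain ⟨j, hj⟩ := hpig
  simp only [hPA, hPB, Finset.mem_inter, Finset.mem_filter, Finset.mem_univ, true_and] at hj
  obtain ⟨hA, hB⟩ := hj
  have hA' : ∀ (q : ℕ) (hq : q < r), q = j.val →
      G.Adj (Sum.inr (l[q]'hq)) (Sum.inl a) := by
    rintro q hq rfl
    simpa using hA.symm
  have hB' : ∀ (q : ℕ) (hq : q < r), q = (j.val + 1) % r →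
      G.Adj (Sum.inr a) (Sum.inl (l[q]'hq)) := by
    rintro q hq rfl
    simpa [List.get_eq_getElem, hsucc j] using hB
  refine ⟨l.rotate (j.val + 1) ++ [a], ⟨?_, ?_, ?_⟩, ?_, ?_⟩
  · simp only [List.length_append, List.length_rotate, List.length_singleton]
    omega
  · rw [List.nodup_append]
    refine ⟨List.nodup_rotate.mpr hnd, List.nodup_singleton a, ?_⟩
    intro x hx y hx2
    rw [List.mem_singleton] at hx2
    subst hx2
    rintro rfl
    exact hal (List.mem_rotate.mp hx)
  · intro p
    have hL : (l.rotate (j.val + 1) ++ [a]).length = r + 1 := by simp [hrdef]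
    have hget : ∀ (k : ℕ) (hk : k < r),
        (l.rotate (j.val + 1) ++ [a])[k]'(by rw [hL]; omega) =
          l[(k + (j.val + 1)) % r]'(Nat.mod_lt _ hr0) := by
      intro k hk
      rw [List.getElem_append_left (by rwa [List.length_rotate]), List.getElem_rotate]
    have hgetr : (l.rotate (j.val + 1) ++ [a])[r]'(by rw [hL]; omega) = a := by
      rw [List.getElem_append_right (by rw [List.length_rotate])]
      simp
    obtain ⟨pv, hp⟩ := p
    simp only [List.get_eq_getElem, hL] at hp ⊢
    rcases Nat.lt_or_ge (pv + 1) r with h1 | h1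
    · simp only [show (pv + 1) % (r + 1) = pv + 1 from Nat.mod_eq_of_lt (by omega)]
      rw [hget pv (by omega), hget (pv + 1) (by omega)]
      exact hadj3 _ _ _ _ (by rw [Nat.mod_add_mod]; congr 1; omega)
    · rcases Nat.lt_or_ge pv r with h2 | h2
      · have hpv : pv + 1 = r := by omega
        simp only [show (pv + 1) % (r + 1) = r from by rw [hpv]; exact Nat.mod_eq_of_lt (by omega)]
        rw [hget pv (by omega), hgetr]
        exact hA' _ _ (by
          rw [show pv + (j.val + 1) = r + j.val by omega, Nat.add_mod_left,
            Nat.mod_eq_of_lt j.isLt])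
      · have hpv : pv = r := by omega
        simp only [hpv, show (r + 1) % (r + 1) = 0 from Nat.mod_self _]
        rw [hgetr, hget 0 (by omega)]
        exact hB' _ _ (by simp)
  · intro b hb
    rcases List.mem_append.mp hb with h | h
    · exact Or.inl (List.mem_rotate.mp h)
    · exact Or.inr (List.mem_singleton.mp h)
  · have ht : (l.rotate (j.val + 1) ++ [a]).toFinset = insert a l.toFinset := by
      ext x
      simp [List.mem_rotate, or_comm]
    rw [ht, Finset.insert_inter_of_mem haS]
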